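/- The tent map T(x) = 1 − |2x − 1| on [0,1] has an uncountable 1-scrambled set S which is dense in [0,1], invariant under T, and consists entirely of transitive points of T. -/
import Mathlib


open Filter Set Function

/-- `limsup_{n→∞} |fⁿ(x) − fⁿ(y)|`. -/
noncomputable def limsupD (f : ℝ → ℝ) (x y : ℝ) : ℝ :=
  Filter.limsup (fun n : ℕ => |f^[n] x - f^[n] y|) Filter.atTop

/-- `liminf_{n→∞} |fⁿ(x) − fⁿ(y)|`. -/
noncomputable def liminfD (f : ℝ → ℝ) (x y : ℝ) : ℝ :=
  Filter.liminf (fun n : ℕ => |f^[n] x - f^[n] y|) Filter.atTop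

/-- `p` is a periodic point of `f`. -/
def PerPt (f : ℝ → ℝ) (p : ℝ) : Prop := ∃ m : ℕ, 0 < m ∧ f^[m] p = p

/-- `p` is a periodic point of `f` of least period `k`. -/
def LeastPeriod (f : ℝ → ℝ) (p : ℝ) (k : ℕ) : Prop :=
  f^[k] p = p ∧ ∀ i : ℕ, 0 < i → i < k → f^[i] p ≠ p

/-- `S ⊆ I` is a `δ`-scrambled set of the map `f : I → I`. -/
def ScrambledSet (f : ℝ → ℝ) (I : Set ℝ) (δ : ℝ) (S : Set ℝ) : Prop :=
  S ⊆ I ∧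
  (∀ x ∈ S, ∀ y ∈ S, x ≠ y → δ ≤ limsupD f x y ∧ liminfD f x y = 0) ∧
  (∀ x ∈ S, ∀ p ∈ I, PerPt f p → δ / 2 ≤ limsupD f x p)

/-- The ω-limit set of `x` under `f`: the set of limit points of the orbit of `x`. -/
def OmegaSet (f : ℝ → ℝ) (x : ℝ) : Set ℝ :=
  {y : ℝ | ∀ ε > 0, ∀ N : ℕ, ∃ n ≥ N, |f^[n] x - y| < ε}

/-- `x` is a recurrent point of `f`. -/
def RecPt (f : ℝ → ℝ) (x : ℝ) : Prop := x ∈ OmegaSet f x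

/-- `f` is turbulent on `I`: there are closed nondegenerate subintervals `J₀, J₁` of `I`
with at most one common point with `f(J₀) ∩ f(J₁) ⊇ J₀ ∪ J₁`. -/
def Turbulent (f : ℝ → ℝ) (I : Set ℝ) : Prop :=
  ∃ p q r s : ℝ, p < q ∧ r < s ∧ Set.Icc p q ⊆ I ∧ Set.Icc r s ⊆ I ∧
    (Set.Icc p q ∩ Set.Icc r s).Subsingleton ∧
    Set.Icc p q ∪ Set.Icc r s ⊆ f '' Set.Icc p q ∩ f '' Set.Icc r s

/-- `f` is strictly turbulent on `I`: the two intervals can be chosen disjoint. -/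
def StrictlyTurbulent (f : ℝ → ℝ) (I : Set ℝ) : Prop :=
  ∃ p q r s : ℝ, p < q ∧ r < s ∧ Set.Icc p q ⊆ I ∧ Set.Icc r s ⊆ I ∧
    Disjoint (Set.Icc p q) (Set.Icc r s) ∧
    Set.Icc p q ∪ Set.Icc r s ⊆ f '' Set.Icc p q ∩ f '' Set.Icc r s

/-- The tent map `T(x) = 1 - |2x - 1|`. -/
noncomputable def tentMap : ℝ → ℝ := fun x => 1 - |2 * x - 1|

lemma uncountable_funs : ¬ Countable (ℕ → Bool) := by
  intro h
  obtain ⟨f, hf⟩ := exists_injective_nat (ℕ → Bool)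
  have hsurj : Surjective (invFun f) := invFun_surjective hf
  obtain ⟨m, hm⟩ := hsurj (fun n => !(invFun f n n))
  have := congrFun hm m
  cases h' : invFun f m m <;> rw [h'] at this <;> simp at this

noncomputable def bval (b : ℕ → Bool) : ℝ := ∑' i, if b i then (1/2:ℝ)^(i+1) else 0

lemma bval_term_nonneg (b : ℕ → Bool) (i : ℕ) : (0:ℝ) ≤ if b i then (1/2:ℝ)^(i+1) else 0 := by
  split <;> positivity

lemma bval_summable (b : ℕ → Bool) : Summable (fun i => if b i then (1/2:ℝ)^(i+1) else 0) := by
  apply Summable.of_nonneg_of_le (bval_term_nonneg b) (fun i => ?_)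
    (summable_geometric_two.mul_left (1/2))
  have h : ((1/2:ℝ)) * (1/2)^i = (1/2)^(i+1) := by ring
  rw [h]
  split
  · exact le_rfl
  · positivity

lemma bval_nonneg (b : ℕ → Bool) : 0 ≤ bval b := tsum_nonneg (bval_term_nonneg b)

noncomputable def headSum (L : ℕ) (b : ℕ → Bool) : ℝ :=
  ∑ i ∈ Finset.range L, if b i then (1/2:ℝ)^(i+1) else 0

lemma bval_split (b : ℕ → Bool) (L : ℕ) :
    bval b = headSum L b + (1/2:ℝ)^L * bval (fun i => b (i + L)) := by
  have h := Summable.sum_add_tsum_nat_add (f := fun i => if b i then (1/2:ℝ)^(i+1) else 0) L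
    (bval_summable b)
  rw [bval, ← h, headSum]
  congr 1
  rw [bval, ← tsum_mul_left]
  apply tsum_congr
  intro i
  by_cases hb : b (i + L) <;> simp [hb] <;> ring

lemma headSum_nonneg (L : ℕ) (b : ℕ → Bool) : 0 ≤ headSum L b :=
  Finset.sum_nonneg (fun i _ => bval_term_nonneg b i)

lemma geom_head (L : ℕ) : ∑ i ∈ Finset.range L, (1/2:ℝ)^(i+1) = 1 - (1/2)^L := by
  induction L with
  | zero => simp
  | succ n ih => rw [Finset.sum_range_succ, ih]; ring

lemma headSum_le (L : ℕ) (b : ℕ → Bool) : headSum L b ≤ 1 - (1/2:ℝ)^L := by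
  rw [← geom_head]
  apply Finset.sum_le_sum
  intro i _
  split
  · exact le_rfl
  · positivity

lemma tsum_halves : ∑' i:ℕ, (1/2:ℝ)^(i+1) = 1 := by
  have h : ∀ i:ℕ, (1/2:ℝ)^(i+1) = (1/2) * (1/2)^i := fun i => by ring
  rw [tsum_congr h, tsum_mul_left, tsum_geometric_two]
  norm_num

lemma bval_le_one (b : ℕ → Bool) : bval b ≤ 1 := by
  rw [← tsum_halves]
  apply Summable.tsum_le_tsum _ (bval_summable b) (by
    apply Summable.congr (summable_geometric_two.mul_left (1/2))
    intro i; ring)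
  intro i
  split
  · exact le_rfl
  · positivity

lemma bval_zeros (b : ℕ → Bool) (L : ℕ) (h : ∀ i < L, b i = false) : bval b ≤ (1/2:ℝ)^L := by
  rw [bval_split b L]
  have h0 : headSum L b = 0 := Finset.sum_eq_zero (fun i hi => by
    rw [h i (Finset.mem_range.mp hi)]; simp)
  rw [h0, zero_add]
  calc (1/2:ℝ)^L * bval (fun i => b (i + L)) ≤ (1/2)^L * 1 := by
        apply mul_le_mul_of_nonneg_left (bval_le_one _) (by positivity)
    _ = (1/2)^L := by ring

lemma bval_ones (b : ℕ → Bool) (L : ℕ) (h : ∀ i < L, b i = true) :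
    1 - (1/2:ℝ)^L ≤ bval b := by
  rw [bval_split b L]
  have h0 : headSum L b = 1 - (1/2:ℝ)^L := by
    rw [headSum, ← geom_head]
    apply Finset.sum_congr rfl
    intro i hi
    rw [h i (Finset.mem_range.mp hi)]; simp
  rw [h0]
  have := bval_nonneg (fun i => b (i + L))
  nlinarith [pow_pos (by norm_num : (0:ℝ) < 1/2) L]

lemma bval_single_false (b : ℕ → Bool) (m : ℕ) (h : b m = false) :
    bval b ≤ 1 - (1/2:ℝ)^(m+1) := by
  rw [bval_split b (m+1)]
  have h0 : headSum (m+1) b = headSum m b := by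
    rw [headSum, headSum, Finset.sum_range_succ, h]; simp
  rw [h0]
  have h1 := headSum_le m b
  have h2 := bval_le_one (fun i => b (i + (m+1)))
  have h3 : (0:ℝ) < (1/2)^m := by positivity
  have h4 : ((1/2:ℝ))^(m+1) = (1/2)^m * (1/2) := by ring
  nlinarith

lemma bval_lt (b c : ℕ → Bool) (n m : ℕ) (hagree : ∀ i < n, b i = c i)
    (hb : b n = true) (hc : c n = false) (hm : n < m) (hcm : c m = false) :
    bval c < bval b := by
  have hsplitb := bval_split b (n+1)
  have hsplitc := bval_split c (n+1)
  have hhead : headSum (n+1) c = headSum n b := by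
    rw [headSum, headSum, Finset.sum_range_succ, hc]
    simp only [if_neg (by simp : ¬ (false = true)), add_zero]
    exact Finset.sum_congr rfl (fun i hi => by rw [hagree i (Finset.mem_range.mp hi)])
  have hheadb : headSum (n+1) b = headSum n b + (1/2:ℝ)^(n+1) := by
    rw [headSum, headSum, Finset.sum_range_succ, hb]; simp
  have hcc : bval (fun i => c (i + (n+1))) ≤ 1 - (1/2:ℝ)^(m - n) := by
    have := bval_single_false (fun i => c (i + (n+1))) (m - (n+1)) (by
      show c (m - (n+1) + (n+1)) = false
      have he : m - (n+1) + (n+1) = m := by omega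
      rw [he, hcm])
    have heq : m - (n+1) + 1 = m - n := by omega
    rwa [heq] at this
  have hbb : 0 ≤ bval (fun i => b (i + (n+1))) := bval_nonneg _
  have hp1 : (0:ℝ) < (1/2)^(n+1) := by positivity
  have hp2 : (0:ℝ) < (1/2)^(m - n) := by positivity
  rw [hsplitb, hsplitc, hhead, hheadb]
  have key : (1/2:ℝ)^(n+1) * bval (fun i => c (i + (n+1))) < (1/2)^(n+1) := by
    nlinarith
  nlinarith

lemma tent_bval (b : ℕ → Bool) (n : ℕ) :
    tentMap^[n+1] (bval b) = 1 - |2 * bval (fun i => b (i + n)) - 1| := by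
  induction n with
  | zero =>
    have h0 : (fun i => b (i + 0)) = b := by funext i; rw [Nat.add_zero]
    rw [Function.iterate_one, h0]
    rfl
  | succ n ih =>
    rw [Function.iterate_succ_apply', ih]
    have hsplit := bval_split (fun i => b (i + n)) 1
    have hcomp : (fun i => (fun j => b (j + n)) (i + 1)) = (fun i => b (i + (n+1))) := by
      funext i
      show b (i + 1 + n) = b (i + (n+1))
      congr 1
      omega
    rw [hcomp] at hsplit
    set r' := bval (fun i => b (i + (n+1))) with hr'
    have hr'0 : 0 ≤ r' := bval_nonneg _
    have hr'1 : r' ≤ 1 := bval_le_one _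
    by_cases hb : b n
    · have hhead : headSum 1 (fun i => b (i + n)) = 1/2 := by
        simp [headSum, hb]
      rw [hhead] at hsplit
      rw [hsplit, tentMap]
      have h1 : 2 * (1/2 + (1/2:ℝ)^1 * r') - 1 = r' := by ring
      rw [h1, abs_of_nonneg hr'0]
      have h2 : 2 * (1 - r') - 1 = -(2*r' - 1) := by ring
      rw [h2, abs_neg]
    · have hhead : headSum 1 (fun i => b (i + n)) = 0 := by
        simp [headSum, hb]
      rw [hhead] at hsplit
      rw [hsplit, tentMap]
      have h1 : 2 * (0 + (1/2:ℝ)^1 * r') - 1 = r' - 1 := by ring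
      rw [h1]
      have habs : |r' - 1| = 1 - r' := by
        rw [abs_of_nonpos (by linarith)]; ring
      rw [habs]
      have h2 : 2 * (1 - (1 - r')) - 1 = 2 * r' - 1 := by ring
      rw [h2]

lemma tent_mem (b : ℕ → Bool) (n : ℕ) : tentMap^[n+1] (bval b) ∈ Set.Icc (0:ℝ) 1 := by
  rw [tent_bval]
  set R := bval (fun i => b (i + n))
  have h0 : 0 ≤ R := bval_nonneg _
  have h1 : R ≤ 1 := bval_le_one _
  constructor
  · have : |2 * R - 1| ≤ 1 := by rw [abs_le]; constructor <;> linarith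
    linarith
  · have : 0 ≤ |2 * R - 1| := abs_nonneg _
    linarith

lemma tent_near_zero (b : ℕ → Bool) (n L : ℕ) (h : ∀ t < L, b (t + n) = false) :
    tentMap^[n+1] (bval b) ≤ 2 * (1/2:ℝ)^L := by
  rw [tent_bval]
  set R := bval (fun i => b (i + n)) with hR
  have hRle : R ≤ (1/2:ℝ)^L := bval_zeros _ L h
  have : -(2*R - 1) ≤ |2 * R - 1| := neg_le_abs _
  linarith

lemma tent_near_zero' (b : ℕ → Bool) (n L : ℕ) (h : ∀ t < L, b (t + n) = true) :
    tentMap^[n+1] (bval b) ≤ 2 * (1/2:ℝ)^L := by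
  rw [tent_bval]
  set R := bval (fun i => b (i + n)) with hR
  have hRge : 1 - (1/2:ℝ)^L ≤ R := bval_ones _ L h
  have : 2*R - 1 ≤ |2 * R - 1| := le_abs_self _
  linarith

lemma tent_near_one (b : ℕ → Bool) (n L : ℕ) (h0 : b n = false)
    (h : ∀ t < L, b (t + (n+1)) = true) :
    1 - 2 * (1/2:ℝ)^L ≤ tentMap^[n+1] (bval b) := by
  rw [tent_bval]
  have hsplit := bval_split (fun i => b (i + n)) 1
  have hcomp : (fun i => (fun j => b (j + n)) (i + 1)) = (fun i => b (i + (n+1))) := by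
    funext i
    show b (i + 1 + n) = b (i + (n+1))
    congr 1
    omega
  rw [hcomp] at hsplit
  have hhead : headSum 1 (fun i => b (i + n)) = 0 := by
    simp [headSum, h0]
  rw [hhead, zero_add] at hsplit
  have h1 : 1 - (1/2:ℝ)^L ≤ bval (fun i => b (i + (n+1))) := bval_ones _ L h
  have h2 : bval (fun i => b (i + (n+1))) ≤ 1 := bval_le_one _
  rw [hsplit]
  have habs : |2 * ((1/2:ℝ)^1 * bval (fun i => b (i + (n+1)))) - 1| ≤ (1/2:ℝ)^L := by
    rw [abs_le]
    constructor
    · nlinarith [pow_nonneg (by norm_num : (0:ℝ) ≤ 1/2) L]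
    · nlinarith [pow_nonneg (by norm_num : (0:ℝ) ≤ 1/2) L]
  have := neg_abs_le (2 * ((1/2:ℝ)^1 * bval (fun i => b (i + (n+1)))) - 1)
  nlinarith [abs_nonneg (2 * ((1/2:ℝ)^1 * bval (fun i => b (i + (n+1)))) - 1)]

lemma tent_word (b : ℕ → Bool) (n L G : ℕ) (w : List Bool)
    (hlen : ∀ t < L, b (t + n) = w.getD t false)
    (hz : ∀ t, L ≤ t → t < L + G → b (t + n) = false) :
    |tentMap^[n+1] (bval b) - (1 - |2 * headSum L (fun t => w.getD t false) - 1|)| ≤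
      2 * (1/2:ℝ)^(L+G) := by
  rw [tent_bval]
  set q := headSum L (fun t => w.getD t false) with hq
  set R := bval (fun i => b (i + n)) with hR
  have hsplit := bval_split (fun i => b (i + n)) L
  have hcomp : (fun i => (fun j => b (j + n)) (i + L)) = (fun i => b (i + (n+L))) := by
    funext i
    show b (i + L + n) = b (i + (n+L))
    congr 1
    omega
  rw [hcomp] at hsplit
  have hhead : headSum L (fun i => b (i + n)) = q := by
    rw [headSum, hq, headSum]
    apply Finset.sum_congr rfl
    intro i hi
    rw [hlen i (Finset.mem_range.mp hi)]
  have htail : bval (fun i => b (i + (n+L))) ≤ (1/2:ℝ)^G := by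
    apply bval_zeros
    intro i hi
    show b (i + (n + L)) = false
    rw [show i + (n + L) = (L + i) + n by omega]
    exact hz (L + i) (by omega) (by omega)
  have htail0 : 0 ≤ bval (fun i => b (i + (n+L))) := bval_nonneg _
  have hRq : |R - q| ≤ (1/2:ℝ)^(L+G) := by
    rw [← hR] at hsplit
    rw [hsplit, hhead]
    rw [show q + (1/2:ℝ)^L * bval (fun i => b (i + (n+L))) - q
        = (1/2:ℝ)^L * bval (fun i => b (i + (n+L))) from by ring]
    rw [abs_of_nonneg (mul_nonneg (by positivity) htail0)]
    calc (1/2:ℝ)^L * bval (fun i => b (i + (n+L)))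
        ≤ (1/2:ℝ)^L * (1/2)^G := mul_le_mul_of_nonneg_left htail (by positivity)
      _ = (1/2:ℝ)^(L+G) := by rw [pow_add]
  have key : |1 - |2*R - 1| - (1 - |2*q - 1|)| ≤ |(2*q - 1) - (2*R - 1)| := by
    rw [show 1 - |2*R - 1| - (1 - |2*q - 1|) = |2*q - 1| - |2*R - 1| from by ring]
    exact abs_abs_sub_abs_le_abs_sub _ _
  have key2 : |(2*q - 1) - (2*R - 1)| = 2 * |R - q| := by
    rw [show (2*q - 1) - (2*R - 1) = 2*(q - R) from by ring, abs_mul, abs_sub_comm]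
    norm_num
  rw [key2] at key
  linarith

lemma headSum_cons (a : Bool) (w : List Bool) (L : ℕ) :
    headSum (L+1) (fun t => (a :: w).getD t false) =
      (if a then (1/2:ℝ) else 0) + (1/2) * headSum L (fun t => w.getD t false) := by
  rw [headSum, Finset.sum_range_succ']
  have h1 : ∀ i, (if (a :: w).getD (i+1) false then (1/2:ℝ)^(i+1+1) else 0)
      = (1/2) * (if w.getD i false then (1/2:ℝ)^(i+1) else 0) := by
    intro i
    rw [List.getD_cons_succ]
    split <;> ring
  rw [Finset.sum_congr rfl (fun i _ => h1 i), ← Finset.mul_sum]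
  rw [List.getD_cons_zero]
  rw [headSum]
  split <;> ring

lemma dyadic : ∀ (L : ℕ) (y : ℝ), 0 ≤ y → y ≤ 1 →
    ∃ w : List Bool, w.length = L ∧
      headSum L (fun t => w.getD t false) ≤ y ∧
      y ≤ headSum L (fun t => w.getD t false) + (1/2:ℝ)^L := by
  intro L
  induction L with
  | zero =>
    intro y h0 h1
    exact ⟨[], rfl, by simp [headSum]; linarith, by simp [headSum]; linarith⟩
  | succ L ih =>
    intro y h0 h1
    by_cases hy : (1/2:ℝ) ≤ y
    · obtain ⟨w, hlen, hl, hr⟩ := ih (2*y - 1) (by linarith) (by linarith)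
      refine ⟨true :: w, by simp [hlen], ?_, ?_⟩
      · rw [headSum_cons, if_pos rfl]; linarith
      · rw [headSum_cons, if_pos rfl]
        have hp : ((1/2:ℝ))^(L+1) = (1/2) * (1/2)^L := by ring
        rw [hp]; linarith
    · push_neg at hy
      obtain ⟨w, hlen, hl, hr⟩ := ih (2*y) (by linarith) (by linarith)
      refine ⟨false :: w, by simp [hlen], ?_, ?_⟩
      · rw [headSum_cons, if_neg (by simp)]; linarith
      · rw [headSum_cons, if_neg (by simp)]
        have hp : ((1/2:ℝ))^(L+1) = (1/2) * (1/2)^L := by ring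
        rw [hp]; linarith

def bstart (j : ℕ) : ℕ := 11*j*j + 12*j

lemma bstart_succ (j : ℕ) : bstart (j+1) = bstart j + (22*j + 23) := by
  simp only [bstart]; ring

lemma bstart_mono : Monotone bstart := by
  intro a c h
  simp only [bstart]
  nlinarith

lemma self_le_bstart (j : ℕ) : j ≤ bstart j := by
  simp only [bstart]; nlinarith

def blk (i : ℕ) : ℕ := Nat.findGreatest (fun j => bstart j ≤ i) i

lemma blk_le (i : ℕ) : bstart (blk i) ≤ i :=
  Nat.findGreatest_spec (P := fun j => bstart j ≤ i) (Nat.zero_le i) (by simp [bstart])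

lemma blk_lt (i : ℕ) : i < bstart (blk i + 1) := by
  by_contra h
  push_neg at h
  have h2 : blk i + 1 ≤ i := le_trans (self_le_bstart _) h
  have h3 : blk i + 1 ≤ blk i := Nat.le_findGreatest h2 h
  omega

lemma blk_eq (j t : ℕ) (ht : t < 22*j + 23) : blk (bstart j + t) = j := by
  set i := bstart j + t with hi
  have h1 := blk_le i
  have h2 := blk_lt i
  by_contra hne
  rcases Nat.lt_or_ge (blk i) j with h | h
  · have : blk i + 1 ≤ j := h
    have := bstart_mono this
    omega
  · have : j + 1 ≤ blk i := by omega
    have h3 := bstart_mono this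
    rw [bstart_succ] at h3
    omega

def eBit (α : ℕ → Bool) (j : ℕ) : Bool :=
  if j % 2 = 1 then true else α (Nat.unpair (j / 2)).1

def blockWord (j : ℕ) : List Bool :=
  let w := ((Encodable.decode (α := List Bool) (Nat.unpair j).1)).getD []
  if w.length ≤ j + 1 then w else []

lemma blockWord_len (j : ℕ) : (blockWord j).length ≤ j + 1 := by
  rw [blockWord]
  split
  · assumption
  · simp

def blockDigit (α : ℕ → Bool) (j o : ℕ) : Bool :=
  if o = 0 then false
  else if o ≤ j+1 then eBit α j
  else if o ≤ 11*(j+1) then false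
  else if o ≤ 12*(j+1) then (blockWord j).getD (o - (11*(j+1)+1)) false
  else false

def digit (α : ℕ → Bool) (i : ℕ) : Bool := blockDigit α (blk i) (i - bstart (blk i))

lemma digit_at (α : ℕ → Bool) (j t : ℕ) (ht : t < 22*j + 23) :
    digit α (bstart j + t) = blockDigit α j t := by
  rw [digit, blk_eq j t ht]
  congr 1
  omega

-- specific digit facts
lemma dig_event0 (α : ℕ → Bool) (j : ℕ) : digit α (bstart j) = false := by
  have := digit_at α j 0 (by omega)
  rw [Nat.add_zero] at this
  rw [this, blockDigit, if_pos rfl]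

lemma dig_event1 (α : ℕ → Bool) (j t : ℕ) (h1 : 1 ≤ t) (h2 : t ≤ j+1) :
    digit α (bstart j + t) = eBit α j := by
  rw [digit_at α j t (by omega), blockDigit, if_neg (by omega), if_pos h2]

lemma dig_zero_mid (α : ℕ → Bool) (j t : ℕ) (h1 : j+2 ≤ t) (h2 : t ≤ 11*(j+1)) :
    digit α (bstart j + t) = false := by
  rw [digit_at α j t (by omega), blockDigit, if_neg (by omega), if_neg (by omega), if_pos h2]

lemma dig_word (α : ℕ → Bool) (j t : ℕ) (ht : t < (blockWord j).length) :
    digit α (bstart j + (11*(j+1)+1+t)) = (blockWord j).getD t false := by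
  have hlen := blockWord_len j
  rw [digit_at α j (11*(j+1)+1+t) (by omega), blockDigit,
    if_neg (show ¬ (11*(j+1)+1+t = 0) by omega),
    if_neg (show ¬ (11*(j+1)+1+t ≤ j+1) by omega),
    if_neg (show ¬ (11*(j+1)+1+t ≤ 11*(j+1)) by omega),
    if_pos (show 11*(j+1)+1+t ≤ 12*(j+1) by omega)]
  rw [show 11*(j+1)+1+t - (11*(j+1)+1) = t from by omega]

lemma dig_zero_end (α : ℕ → Bool) (j t : ℕ) (h1 : 11*(j+1)+1+(blockWord j).length ≤ t)
    (h2 : t ≤ 22*j + 22) : digit α (bstart j + t) = false := by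
  rw [digit_at α j t (by omega), blockDigit, if_neg (by omega), if_neg (by omega)]
  split
  · rfl
  · split
    · apply List.getD_eq_default
      omega
    · rfl

lemma eBit_odd (α : ℕ → Bool) (j : ℕ) (h : j % 2 = 1) : eBit α j = true := by
  rw [eBit, if_pos h]

lemma eBit_even (α : ℕ → Bool) (i s : ℕ) : eBit α (2 * Nat.pair i s) = α i := by
  rw [eBit, if_neg (by omega), Nat.mul_div_cancel_left _ (by norm_num), Nat.unpair_pair]

lemma zeros_around (β : ℕ → Bool) (j : ℕ) (hj : 1 ≤ j) (hE : eBit β j = false) (i : ℕ)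
    (h1 : bstart j ≤ i + 10*j) (h2 : i ≤ bstart j + 11*(j+1)) : digit β i = false := by
  rcases Nat.lt_or_ge i (bstart j) with h | h
  · obtain ⟨j', rfl⟩ : ∃ j', j = j' + 1 := ⟨j - 1, by omega⟩
    have hs := bstart_succ j'
    have hlen := blockWord_len j'
    have ht : i = bstart j' + (i - bstart j') := by omega
    rw [ht]
    apply dig_zero_end β j' _ (by omega) (by omega)
  · have ht : i = bstart j + (i - bstart j) := by omega
    set t := i - bstart j with hdef
    rcases Nat.eq_zero_or_pos t with h0 | hpos
    · rw [ht, h0, Nat.add_zero]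
      exact dig_event0 β j
    · rcases Nat.lt_or_ge (j+1) t with hgt | hle
      · rw [ht]
        exact dig_zero_mid β j t (by omega) (by omega)
      · rw [ht, dig_event1 β j t (by omega) (by omega)]
        exact hE

lemma xpt_in_icc (α : ℕ → Bool) (M : ℕ) : tentMap^[M] (bval (digit α)) ∈ Set.Icc (0:ℝ) 1 := by
  cases M with
  | zero => exact ⟨bval_nonneg _, bval_le_one _⟩
  | succ m => exact tent_mem _ m

-- x-side near 1 at event start
lemma event_one (α : ℕ → Bool) (j : ℕ) (hE : eBit α j = true) :
    1 - (1/2:ℝ)^j ≤ tentMap^[bstart j + 1] (bval (digit α)) := by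
  have h := tent_near_one (digit α) (bstart j) (j+1) (dig_event0 α j) (fun t ht => by
    rw [show t + (bstart j + 1) = bstart j + (t+1) from by omega]
    rw [dig_event1 α j (t+1) (by omega) (by omega)]
    exact hE)
  have : 2 * (1/2:ℝ)^(j+1) = (1/2)^j := by ring
  linarith [h]

-- partner near 0 around event (eBit false)
lemma event_zero_near (β : ℕ → Bool) (j : ℕ) (hj : 1 ≤ j) (hE : eBit β j = false) (p : ℕ)
    (h1 : bstart j ≤ p + 10*j) (h2 : p + j ≤ bstart j + 11*(j+1)) :
    tentMap^[p+1] (bval (digit β)) ≤ 2 * (1/2:ℝ)^j := by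
  apply tent_near_zero (digit β) p j
  intro t ht
  exact zeros_around β j hj hE (t + p) (by omega) (by omega)

-- near 0 inside event true-run
lemma event_zero_inside (α : ℕ → Bool) (j d L : ℕ) (hE : eBit α j = true)
    (hd : 1 ≤ d) (hL : 1 ≤ L) (hdL : d + L ≤ j + 2) :
    tentMap^[(bstart j + d) + 1] (bval (digit α)) ≤ 2 * (1/2:ℝ)^L := by
  apply tent_near_zero' (digit α) _ L
  intro t ht
  rw [show t + (bstart j + d) = bstart j + (t + d) from by omega]
  rw [dig_event1 α j (t+d) (by omega) (by omega)]
  exact hE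

-- near 0 in middle zero region
lemma mid_zero (α : ℕ → Bool) (j p L : ℕ) (h1 : bstart j + (j+2) ≤ p)
    (h2 : p + L ≤ bstart j + 11*(j+1) + 1) :
    tentMap^[p+1] (bval (digit α)) ≤ 2 * (1/2:ℝ)^L := by
  apply tent_near_zero (digit α) p L
  intro t ht
  rw [show t + p = bstart j + ((t + p) - bstart j) from by omega]
  exact dig_zero_mid α j _ (by omega) (by omega)

lemma real_le_of_eps (a b : ℝ) (h : ∀ ε, 0 < ε → a ≤ b + ε) : a ≤ b := by
  by_contra hc
  push_neg at hc
  have := h ((a-b)/2) (by linarith)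
  linarith

lemma my_limsup_ge (u : ℕ → ℝ) (c : ℝ) (hb : ∀ n, u n ≤ 1)
    (h : ∀ ε, 0 < ε → ∀ N : ℕ, ∃ n, N ≤ n ∧ c - ε ≤ u n) :
    c ≤ Filter.limsup u Filter.atTop := by
  have hbd : Filter.IsBoundedUnder (· ≤ ·) Filter.atTop u :=
    Filter.isBoundedUnder_of ⟨1, hb⟩
  apply real_le_of_eps
  intro ε hε
  have hf : ∃ᶠ n in Filter.atTop, c - ε ≤ u n := by
    rw [Filter.frequently_atTop]
    intro N
    obtain ⟨n, hn1, hn2⟩ := h ε hε N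
    exact ⟨n, hn1, hn2⟩
  have := Filter.le_limsup_of_frequently_le hf hbd
  linarith

lemma my_liminf_eq_zero (u : ℕ → ℝ) (h0 : ∀ n, 0 ≤ u n) (hb : ∀ n, u n ≤ 1)
    (h : ∀ ε, 0 < ε → ∀ N : ℕ, ∃ n, N ≤ n ∧ u n ≤ ε) :
    Filter.liminf u Filter.atTop = 0 := by
  have hbd : Filter.IsBoundedUnder (· ≥ ·) Filter.atTop u :=
    Filter.isBoundedUnder_of ⟨0, h0⟩
  apply le_antisymm
  · apply real_le_of_eps
    intro ε hε
    have hf : ∃ᶠ n in Filter.atTop, u n ≤ ε := by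
      rw [Filter.frequently_atTop]
      intro N
      obtain ⟨n, hn1, hn2⟩ := h ε hε N
      exact ⟨n, hn1, hn2⟩
    have := Filter.liminf_le_of_frequently_le hf hbd
    linarith
  · apply Filter.le_liminf_of_le
    · exact Filter.IsBoundedUnder.isCoboundedUnder_ge (Filter.isBoundedUnder_of ⟨1, hb⟩)
    · exact Filter.Eventually.of_forall h0

lemma event_gap (α β : ℕ → Bool) (k l j : ℕ) (hA : eBit α j = true) (hB : eBit β j = false)
    (hj : k + l + 2 ≤ j) :
    1 - 3*(1/2:ℝ)^j ≤
      |tentMap^[(bstart j + 1 - k) + k] (bval (digit α)) -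
        tentMap^[(bstart j + 1 - k) + l] (bval (digit β))| := by
  have hbs := self_le_bstart j
  have hk : k ≤ bstart j := by omega
  rw [show (bstart j + 1 - k) + k = bstart j + 1 from by omega]
  have ha := event_one α j hA
  have ha1 : tentMap^[bstart j + 1] (bval (digit α)) ≤ 1 := (xpt_in_icc α _).2
  set m := (bstart j + 1 - k) + l with hm
  have hm1 : m = (bstart j + l - k) + 1 := by omega
  rw [hm1]
  have hb := event_zero_near β j (by omega) hB (bstart j + l - k) (by omega) (by omega)
  have hb0 : 0 ≤ tentMap^[(bstart j + l - k) + 1] (bval (digit β)) := (xpt_in_icc β _).1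
  have := le_abs_self (tentMap^[bstart j + 1] (bval (digit α)) -
    tentMap^[(bstart j + l - k) + 1] (bval (digit β)))
  linarith

lemma event_gap_same (α : ℕ → Bool) (k l j : ℕ) (hE : eBit α j = true) (hkl : k < l)
    (hj : k + l + 2 ≤ j) :
    1 - 3*(1/2:ℝ)^(j - l) ≤
      |tentMap^[(bstart j + 1 - k) + k] (bval (digit α)) -
        tentMap^[(bstart j + 1 - k) + l] (bval (digit α))| := by
  have hbs := self_le_bstart j
  have hk : k ≤ bstart j := by omega
  rw [show (bstart j + 1 - k) + k = bstart j + 1 from by omega]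
  have ha := event_one α j hE
  have ha' : 1 - (1/2:ℝ)^(j-l) ≤ tentMap^[bstart j + 1] (bval (digit α)) := by
    have : ((1/2:ℝ))^j ≤ (1/2)^(j-l) :=
      pow_le_pow_of_le_one (by norm_num) (by norm_num) (by omega)
    linarith
  have ha1 : tentMap^[bstart j + 1] (bval (digit α)) ≤ 1 := (xpt_in_icc α _).2
  rw [show (bstart j + 1 - k) + l = (bstart j + (l - k)) + 1 from by omega]
  have hb := event_zero_inside α j (l - k) (j - l) hE (by omega) (by omega) (by omega)
  have hb0 : 0 ≤ tentMap^[(bstart j + (l - k)) + 1] (bval (digit α)) := (xpt_in_icc α _).1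
  have := le_abs_self (tentMap^[bstart j + 1] (bval (digit α)) -
    tentMap^[(bstart j + (l - k)) + 1] (bval (digit α)))
  linarith

lemma both_small (α β : ℕ → Bool) (k l j : ℕ) (hj : k + l + 2 ≤ j) :
    |tentMap^[(bstart j + j + 3) + k] (bval (digit α)) -
      tentMap^[(bstart j + j + 3) + l] (bval (digit β))| ≤ 4*(1/2:ℝ)^j := by
  have h1 : tentMap^[(bstart j + j + 2 + k) + 1] (bval (digit α)) ≤ 2*(1/2:ℝ)^j :=
    mid_zero α j _ j (by omega) (by omega)
  have h2 : tentMap^[(bstart j + j + 2 + l) + 1] (bval (digit β)) ≤ 2*(1/2:ℝ)^j :=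
    mid_zero β j _ j (by omega) (by omega)
  rw [show (bstart j + j + 3) + k = (bstart j + j + 2 + k) + 1 from by omega,
    show (bstart j + j + 3) + l = (bstart j + j + 2 + l) + 1 from by omega]
  have h10 : 0 ≤ tentMap^[(bstart j + j + 2 + k) + 1] (bval (digit α)) := (xpt_in_icc α _).1
  have h20 : 0 ≤ tentMap^[(bstart j + j + 2 + l) + 1] (bval (digit β)) := (xpt_in_icc β _).1
  rw [abs_le]
  constructor <;> linarith

lemma exists_small_pow (ε : ℝ) (hε : 0 < ε) : ∃ L : ℕ, (1/2:ℝ)^L < ε := by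
  obtain ⟨L, hL⟩ := exists_pow_lt_of_lt_one hε (by norm_num : (1/2:ℝ) < 1)
  exact ⟨L, hL⟩

lemma pow_half_le (a b : ℕ) (h : a ≤ b) : (1/2:ℝ)^b ≤ (1/2)^a :=
  pow_le_pow_of_le_one (by norm_num) (by norm_num) h

lemma orbit_dense (α : ℕ → Bool) (k : ℕ) (z : ℝ) (hz0 : 0 ≤ z) (hz1 : z ≤ 1)
    (ε : ℝ) (hε : 0 < ε) (N : ℕ) :
    ∃ n, N ≤ n ∧ |tentMap^[n + k] (bval (digit α)) - z| < ε := by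
  obtain ⟨L, hL⟩ := exists_small_pow (ε/6) (by linarith)
  obtain ⟨w, hwlen, hql, hqr⟩ := dyadic L (z/2) (by linarith) (by linarith)
  set q := headSum L (fun t => w.getD t false) with hq
  set j := Nat.pair (Encodable.encode w) (L + k + N + 1) with hjdef
  have hj1 : L + k + N + 1 ≤ j := Nat.right_le_pair _ _
  have hbw : blockWord j = w := by
    rw [blockWord]
    simp only [hjdef, Nat.unpair_pair, Encodable.encodek, Option.getD_some]
    rw [if_pos (by omega)]
  have hbs := self_le_bstart j
  set wp := bstart j + 11*(j+1) + 1 with hwp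
  have hk : k ≤ wp := by omega
  refine ⟨wp + 1 - k, by omega, ?_⟩
  rw [show (wp + 1 - k) + k = wp + 1 from by omega]
  have hword := tent_word (digit α) wp L (11*(j+1) - L) w
    (fun t ht => by
      rw [show t + wp = bstart j + (11*(j+1)+1+t) from by omega]
      rw [dig_word α j t (by rw [hbw]; omega), hbw])
    (fun t ht1 ht2 => by
      rw [show t + wp = bstart j + (11*(j+1)+1+t) from by omega]
      apply dig_zero_end α j
      · rw [hbw]; omega
      · omega)
  rw [← hq] at hword
  have hLL : (1/2:ℝ)^(L + (11*(j+1) - L)) ≤ (1/2)^L := pow_half_le _ _ (by omega)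
  have hq0 : 0 ≤ q := headSum_nonneg _ _
  have habs : |2*q - 1| = 1 - 2*q := by
    rw [abs_of_nonpos (by linarith)]
    ring
  rw [habs] at hword
  have h1 : |tentMap^[wp + 1] (bval (digit α)) - 2*q| ≤ 2*(1/2:ℝ)^L := by
    have : (1:ℝ) - (1 - 2*q) = 2*q := by ring
    rw [this] at hword
    linarith
  have h2 : |2*q - z| ≤ 2*(1/2:ℝ)^L := by
    rw [abs_le]
    constructor <;> nlinarith
  calc |tentMap^[wp + 1] (bval (digit α)) - z|
      ≤ |tentMap^[wp + 1] (bval (digit α)) - 2*q| + |2*q - z| := abs_sub_le _ _ _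
    _ ≤ 4*(1/2:ℝ)^L := by linarith
    _ < ε := by linarith

lemma tent_icc (x : ℝ) (h : x ∈ Set.Icc (0:ℝ) 1) : tentMap x ∈ Set.Icc (0:ℝ) 1 := by
  obtain ⟨h0, h1⟩ := h
  constructor
  · have : |2*x - 1| ≤ 1 := by rw [abs_le]; constructor <;> linarith
    simp only [tentMap]
    linarith
  · have : 0 ≤ |2*x - 1| := abs_nonneg _
    simp only [tentMap]
    linarith

lemma tent_iter_icc (x : ℝ) (h : x ∈ Set.Icc (0:ℝ) 1) (n : ℕ) :
    tentMap^[n] x ∈ Set.Icc (0:ℝ) 1 := by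
  induction n with
  | zero => exact h
  | succ n ih => rw [Function.iterate_succ_apply']; exact tent_icc _ ih

lemma per_alternative (p : ℝ) (hp : p ∈ Set.Icc (0:ℝ) 1) (m : ℕ) (hm : 0 < m)
    (hfix : tentMap^[m] p = p) : p = 0 ∨ ∃ r, r < m ∧ 1/2 ≤ tentMap^[r] p := by
  by_contra hc
  push_neg at hc
  obtain ⟨hp0, hsmall⟩ := hc
  have hlt : ∀ r, r < m → tentMap^[r] p < 1/2 := hsmall
  have hdouble : ∀ r, r ≤ m → tentMap^[r] p = 2^r * p := by
    intro r hr
    induction r with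
    | zero => simp
    | succ r ih =>
      have hrm : r < m := by omega
      have hv := hlt r hrm
      have hv0 : 0 ≤ tentMap^[r] p := (tent_iter_icc p hp r).1
      rw [Function.iterate_succ_apply', ih (by omega)]
      have habs : |2*(2^r * p) - 1| = 1 - 2*(2^r * p) := by
        rw [ih (by omega)] at hv
        rw [abs_of_nonpos (by linarith)]
        ring
      simp only [tentMap]
      rw [habs]
      ring
  have h2 : (2:ℝ)^m * p = p := by rw [← hdouble m le_rfl, hfix]
  have hppos : 0 < p := lt_of_le_of_ne hp.1 (Ne.symm hp0)
  have h2m : (1:ℝ) < 2^m := one_lt_pow₀ (by norm_num) (by omega)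
  nlinarith

lemma tent_zero : tentMap 0 = 0 := by
  simp [tentMap]

lemma tent_iter_zero (n : ℕ) : tentMap^[n] 0 = 0 := Function.iterate_fixed tent_zero n

lemma per_reduce (p : ℝ) (m : ℕ) (hfix : tentMap^[m] p = p) (r q : ℕ) :
    tentMap^[r + q * m] p = tentMap^[r] p := by
  rw [Function.iterate_add_apply]
  congr 1
  rw [Nat.mul_comm, Function.iterate_mul]
  exact Function.iterate_fixed hfix q

lemma xpt_ne (α β : ℕ → Bool) (hne : α ≠ β) : bval (digit α) ≠ bval (digit β) := by
  have hdig : ∃ n, digit α n ≠ digit β n := by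
    have hi : ∃ i, α i ≠ β i := by
      by_contra hc
      push_neg at hc
      exact hne (funext hc)
    obtain ⟨i, hi⟩ := hi
    set j := 2 * Nat.pair i 0 with hj
    refine ⟨bstart j + 1, ?_⟩
    rw [dig_event1 α j 1 le_rfl (by omega), dig_event1 β j 1 le_rfl (by omega)]
    rw [hj, eBit_even, eBit_even]
    exact hi
  have hP : ∃ n, (fun n => digit α n ≠ digit β n) n := hdig
  set n₀ := Nat.find hP with hn₀
  have hne0 : digit α n₀ ≠ digit β n₀ := Nat.find_spec hP
  have hagree : ∀ i < n₀, digit α i = digit β i := by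
    intro i hi
    have := Nat.find_min hP hi
    simpa using this
  have hmlt : n₀ < bstart (n₀ + 1) := lt_of_lt_of_le (by omega) (self_le_bstart _)
  cases hα : digit α n₀
  · cases hβ : digit β n₀
    · rw [hα, hβ] at hne0; simp at hne0
    · have := bval_lt (digit β) (digit α) n₀ (bstart (n₀+1))
        (fun i hi => (hagree i hi).symm) hβ hα hmlt (dig_event0 α _)
      intro hc
      rw [hc] at this
      exact absurd this (lt_irrefl _)
  · cases hβ : digit β n₀
    · have := bval_lt (digit α) (digit β) n₀ (bstart (n₀+1))
        (fun i hi => hagree i hi) hα hβ hmlt (dig_event0 β _)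
      intro hc
      rw [hc] at this
      exact absurd this (lt_irrefl _)
    · rw [hα, hβ] at hne0; simp at hne0

lemma diff_le_one (a b : ℝ) (ha : a ∈ Set.Icc (0:ℝ) 1) (hb : b ∈ Set.Icc (0:ℝ) 1) :
    |a - b| ≤ 1 := by
  rw [abs_le]
  obtain ⟨h1, h2⟩ := ha
  obtain ⟨h3, h4⟩ := hb
  constructor <;> linarith


/-- The tent map on `[0,1]` has a dense uncountable invariant
`1`-scrambled set consisting of transitive points. -/
theorem tent_map_has_dense_invariant_scrambled_set :
    ∃ S : Set ℝ, ¬ S.Countable ∧ ScrambledSet tentMap (Set.Icc 0 1) 1 S ∧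
      Set.Icc (0:ℝ) 1 ⊆ closure S ∧ Set.MapsTo tentMap S S ∧
      ∀ x ∈ S, Set.Icc (0:ℝ) 1 ⊆ closure {y : ℝ | ∃ n : ℕ, tentMap^[n] x = y} := by
  classical
  set S : Set ℝ := {x : ℝ | ∃ α k, tentMap^[k] (bval (digit α)) = x} with hS
  have hsub : S ⊆ Set.Icc (0:ℝ) 1 := by
    rintro x ⟨α, k, rfl⟩
    exact xpt_in_icc α k
  have horbit : ∀ (α : ℕ → Bool) (k : ℕ) (z : ℝ), z ∈ Set.Icc (0:ℝ) 1 →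
      z ∈ closure {y : ℝ | ∃ n : ℕ, tentMap^[n] (tentMap^[k] (bval (digit α))) = y} := by
    intro α k z hz
    rw [Metric.mem_closure_iff]
    intro ε hε
    obtain ⟨n, _, hn⟩ := orbit_dense α k z hz.1 hz.2 ε hε 0
    refine ⟨tentMap^[n] (tentMap^[k] (bval (digit α))), ⟨n, rfl⟩, ?_⟩
    rw [Real.dist_eq, ← Function.iterate_add_apply, abs_sub_comm]
    exact hn
  refine ⟨S, ?_, ⟨hsub, ?_, ?_⟩, ?_, ?_, ?_⟩
  · -- uncountable
    intro hc
    apply uncountable_funs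
    have hinj : Function.Injective (fun α : ℕ → Bool => bval (digit α)) := by
      intro α β h
      by_contra hne
      exact xpt_ne α β hne h
    have hrange : Set.range (fun α : ℕ → Bool => bval (digit α)) ⊆ S := by
      rintro x ⟨α, rfl⟩
      exact ⟨α, 0, rfl⟩
    have hcr : (Set.range (fun α : ℕ → Bool => bval (digit α))).Countable := hc.mono hrange
    have hcu : ((fun α : ℕ → Bool => bval (digit α)) ⁻¹'
        (Set.range (fun α : ℕ → Bool => bval (digit α)))).Countable := hcr.preimage hinj
    have huniv : ((fun α : ℕ → Bool => bval (digit α)) ⁻¹'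
        (Set.range (fun α : ℕ → Bool => bval (digit α)))) = Set.univ := by
      ext α
      simp
    rw [huniv, Set.countable_univ_iff] at hcu
    exact hcu
  · -- scrambled pairs
    rintro x ⟨α, k, rfl⟩ y ⟨β, l, rfl⟩ hxy
    have hb : ∀ n : ℕ, |tentMap^[n] (tentMap^[k] (bval (digit α))) -
        tentMap^[n] (tentMap^[l] (bval (digit β)))| ≤ 1 := by
      intro n
      rw [← Function.iterate_add_apply, ← Function.iterate_add_apply]
      exact diff_le_one _ _ (xpt_in_icc α _) (xpt_in_icc β _)
    constructor
    · rw [limsupD]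
      apply my_limsup_ge _ 1 hb
      intro ε hε N
      obtain ⟨M, hM⟩ := exists_small_pow (ε/3) (by linarith)
      by_cases hab : α = β
      · subst hab
        have hkl : k ≠ l := by
          rintro rfl
          exact hxy rfl
        rcases Nat.lt_or_ge k l with h | h
        · set j := 2*(N + k + l + M + 1) + 1 with hj
          have hjodd := eBit_odd α j (by omega)
          have key := event_gap_same α k l j hjodd h (by omega)
          have hbs := self_le_bstart j
          refine ⟨bstart j + 1 - k, by omega, ?_⟩
          rw [← Function.iterate_add_apply, ← Function.iterate_add_apply]
          have hpow : (1/2:ℝ)^(j - l) ≤ (1/2)^M := pow_half_le _ _ (by omega)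
          linarith
        · have hlk : l < k := by omega
          set j := 2*(N + k + l + M + 1) + 1 with hj
          have hjodd := eBit_odd α j (by omega)
          have key := event_gap_same α l k j hjodd hlk (by omega)
          have hbs := self_le_bstart j
          refine ⟨bstart j + 1 - l, by omega, ?_⟩
          rw [← Function.iterate_add_apply, ← Function.iterate_add_apply, abs_sub_comm]
          have hpow : (1/2:ℝ)^(j - k) ≤ (1/2)^M := pow_half_le _ _ (by omega)
          linarith
      · have hi : ∃ i, α i ≠ β i := by
          by_contra hc
          push_neg at hc
          exact hab (funext hc)
        obtain ⟨i, hi⟩ := hi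
        set j := 2 * Nat.pair i (N + k + l + M + 2) with hj
        have hj2 : N + k + l + M + 2 ≤ Nat.pair i (N + k + l + M + 2) :=
          Nat.right_le_pair _ _
        have hjge : N + k + l + M + 2 ≤ j := by omega
        have hbs := self_le_bstart j
        cases hαi : α i
        · have hβi : β i = true := by
            cases hβ : β i
            · rw [hαi, hβ] at hi; simp at hi
            · rfl
          have key := event_gap β α l k j (by rw [hj, eBit_even]; exact hβi)
            (by rw [hj, eBit_even]; exact hαi) (by omega)
          refine ⟨bstart j + 1 - l, by omega, ?_⟩
          rw [← Function.iterate_add_apply, ← Function.iterate_add_apply, abs_sub_comm]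
          have hpow : (1/2:ℝ)^j ≤ (1/2)^M := pow_half_le _ _ (by omega)
          linarith
        · have hβi : β i = false := by
            cases hβ : β i
            · rfl
            · rw [hαi, hβ] at hi; simp at hi
          have key := event_gap α β k l j (by rw [hj, eBit_even]; exact hαi)
            (by rw [hj, eBit_even]; exact hβi) (by omega)
          refine ⟨bstart j + 1 - k, by omega, ?_⟩
          rw [← Function.iterate_add_apply, ← Function.iterate_add_apply]
          have hpow : (1/2:ℝ)^j ≤ (1/2)^M := pow_half_le _ _ (by omega)
          linarith
    · rw [liminfD]
      apply my_liminf_eq_zero _ (fun n => abs_nonneg _) hb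
      intro ε hε N
      obtain ⟨M, hM⟩ := exists_small_pow (ε/4) (by linarith)
      set j := N + k + l + M + 2 with hj
      have hbs := self_le_bstart j
      have key := both_small α β k l j (by omega)
      refine ⟨bstart j + j + 3, by omega, ?_⟩
      rw [← Function.iterate_add_apply, ← Function.iterate_add_apply]
      have hpow : (1/2:ℝ)^j ≤ (1/2)^M := pow_half_le _ _ (by omega)
      linarith
  · -- periodic points
    rintro x ⟨α, k, rfl⟩ p hp hper
    obtain ⟨m, hm, hfix⟩ := hper
    have hb : ∀ n : ℕ, |tentMap^[n] (tentMap^[k] (bval (digit α))) - tentMap^[n] p| ≤ 1 := by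
      intro n
      rw [← Function.iterate_add_apply]
      exact diff_le_one _ _ (xpt_in_icc α _) (tent_iter_icc p hp n)
    rw [show (1:ℝ)/2 = 1/2 from rfl]
    rw [limsupD]
    apply my_limsup_ge _ (1/2) hb
    intro ε hε N
    obtain ⟨M, hM⟩ := exists_small_pow (ε/2) (by linarith)
    rcases per_alternative p hp m hm hfix with hp0 | ⟨r, hrm, hv⟩
    · subst hp0
      set j := 2*(N + k + M + 1) + 1 with hj
      have hjodd := eBit_odd α j (by omega)
      have hbs := self_le_bstart j
      have key := event_one α j hjodd
      refine ⟨bstart j + 1 - k, by omega, ?_⟩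
      rw [← Function.iterate_add_apply, tent_iter_zero, sub_zero,
        show (bstart j + 1 - k) + k = bstart j + 1 from by omega,
        abs_of_nonneg (xpt_in_icc α _).1]
      have hpow : (1/2:ℝ)^j ≤ (1/2)^1 := pow_half_le _ _ (by omega)
      norm_num at hpow
      linarith
    · set j := N + k + m + M + 2 with hj
      have hbs := self_le_bstart j
      set A1 := bstart j + j + 3 with hA1
      have hrk : r + k ≤ A1 := by omega
      set D := A1 - (r + k) with hD
      set q := D/m + 1 with hq
      set n := r + q*m with hn
      have hdiv := Nat.mod_add_div D m
      have hcomm : m * (D / m) = (D/m) * m := Nat.mul_comm _ _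
      have hmod : D % m < m := Nat.mod_lt _ hm
      have hnk1 : A1 + 1 ≤ n + k := by
        have : q * m = (D/m) * m + m := by ring
        omega
      have hnk2 : n + k ≤ A1 + m := by
        have : q * m = (D/m) * m + m := by ring
        omega
      have hsmall := mid_zero α j (n + k - 1) j (by omega) (by omega)
      have hTp : tentMap^[n] p = tentMap^[r] p := per_reduce p m hfix r q
      refine ⟨n, by omega, ?_⟩
      rw [← Function.iterate_add_apply, hTp,
        show n + k = (n + k - 1) + 1 from by omega, abs_sub_comm]
      have h0x : 0 ≤ tentMap^[(n + k - 1) + 1] (bval (digit α)) := (xpt_in_icc α _).1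
      have hpow : (1/2:ℝ)^j ≤ (1/2)^M := pow_half_le _ _ (by omega)
      have hla := le_abs_self (tentMap^[r] p - tentMap^[(n + k - 1) + 1] (bval (digit α)))
      linarith
  · -- dense
    intro z hz
    have h := horbit (fun _ => false) 0 z hz
    apply closure_mono _ h
    rintro y ⟨n, rfl⟩
    exact ⟨(fun _ => false), n + 0, by rw [Function.iterate_add_apply]⟩
  · -- invariant
    rintro x ⟨α, k, rfl⟩
    exact ⟨α, k + 1, by rw [Function.iterate_succ_apply']⟩
  · -- transitive points
    rintro x ⟨α, k, rfl⟩
    intro z hz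
    exact horbit α k z hz
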